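/- Given a real polynomial p, there exists an integer d ≥ deg(p) such that the Bernstein coefficients satisfy 0 ≤ β_{k,d}(p) ≤ 1 for all 0 ≤ k ≤ d, if and only if either (i) p ≡ 0, or (ii) p ≡ 1, or (iii) 0 ≤ p(0) ≤ 1, 0 ≤ p(1) ≤ 1, and 0 < p(x) < 1 for all x ∈ (0,1). -/

import Mathlib

/-!
A polynomial `p` has, for some degree `d ≥ deg p`, all its Bernstein-basis coefficients
in `[0,1]` if and only if `p ≡ 0`, or `p ≡ 1`, or `0 ≤ p(0), p(1) ≤ 1` and
`0 < p(x) < 1` for all `x ∈ (0,1)`.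
-/

open Finset Polynomial



noncomputable def bb (d k : ℕ) (x : ℝ) : ℝ := (d.choose k : ℝ) * x ^ k * (1 - x) ^ (d - k)

lemma bb_eval (d k : ℕ) (x : ℝ) : (bernsteinPolynomial ℝ d k).eval x = bb d k x := by
  simp [bernsteinPolynomial, bb]

lemma bb_nonneg (d k : ℕ) {x : ℝ} (h0 : 0 ≤ x) (h1 : x ≤ 1) : 0 ≤ bb d k x := by
  have h2 : (0:ℝ) ≤ 1 - x := by linarith
  unfold bb
  positivity

lemma bb_pos {d k : ℕ} (hk : k ≤ d) {x : ℝ} (h0 : 0 < x) (h1 : x < 1) : 0 < bb d k x := by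
  have h2 : (0:ℝ) < 1 - x := by linarith
  have h4 : (0:ℝ) < (d.choose k : ℝ) := by exact_mod_cast Nat.choose_pos hk
  unfold bb
  positivity

lemma bb_sum (d : ℕ) (x : ℝ) : ∑ k ∈ range (d + 1), bb d k x = 1 := by
  have := congrArg (Polynomial.eval x) (bernsteinPolynomial.sum ℝ d)
  simpa [Polynomial.eval_finset_sum, bb_eval] using this

lemma bb_mul_x (d k : ℕ) (x : ℝ) :
    x * bb d k x = ((k + 1 : ℝ) / (d + 1)) * bb (d + 1) (k + 1) x := by
  have hc : ((d:ℝ) + 1) * (d.choose k : ℝ) = ((d+1).choose (k+1) : ℝ) * ((k:ℝ) + 1) := by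
    exact_mod_cast Nat.add_one_mul_choose_eq d k
  have hd : (0:ℝ) < (d:ℝ) + 1 := by positivity
  simp only [bb]
  have hsub : d + 1 - (k + 1) = d - k := by omega
  rw [hsub, div_mul_eq_mul_div, eq_div_iff hd.ne']
  linear_combination (x^(k+1) * (1-x)^(d-k)) * hc

lemma bb_mul_one_sub (d k : ℕ) (hk : k ≤ d) (x : ℝ) :
    (1 - x) * bb d k x = (((d:ℝ) + 1 - k) / (d + 1)) * bb (d + 1) k x := by
  have hc : (d.choose k : ℝ) * ((d:ℝ) + 1) = ((d+1).choose k : ℝ) * ((d:ℝ) + 1 - k) := by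
    have := Nat.choose_mul_succ_eq d k
    have h2 : ((d.choose k : ℕ) * (d+1) : ℕ) = ((d+1).choose k) * (d + 1 - k) := this
    have h3 : ((d:ℝ) + 1 - (k:ℝ)) = ((d + 1 - k : ℕ) : ℝ) := by
      rw [Nat.cast_sub (by omega)]; push_cast; ring
    rw [h3]; exact_mod_cast h2
  have hd : (0:ℝ) < (d:ℝ) + 1 := by positivity
  simp only [bb]
  have hsub : d + 1 - k = (d - k) + 1 := by omega
  rw [hsub, div_mul_eq_mul_div, eq_div_iff hd.ne', pow_succ]
  linear_combination (x^k * (1-x)^(d-k) * (1 - x)) * hc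

lemma pow_eq_sum (d j : ℕ) (hj : j ≤ d) (x : ℝ) :
    x ^ j = ∑ k ∈ range (d + 1), ((k.choose j : ℝ) / (d.choose j)) * bb d k x := by
  have hdj : (0:ℝ) < (d.choose j : ℝ) := by exact_mod_cast Nat.choose_pos hj
  have key : ∀ i, i ≤ d - j →
      (((i+j).choose j : ℝ) / (d.choose j)) * bb d (i+j) x = x ^ j * bb (d-j) i x := by
    intro i hi
    have h1 : Nat.choose d (i+j) * Nat.choose (i+j) j = Nat.choose d j * Nat.choose (d-j) i := by
      have := Nat.choose_mul (n := d) (k := i+j) (s := j) (by omega)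
      simpa using this
    have h1r : ((d.choose (i+j) : ℝ)) * ((i+j).choose j : ℝ)
        = (d.choose j : ℝ) * ((d-j).choose i : ℝ) := by exact_mod_cast h1
    simp only [bb]
    have he : d - (i+j) = (d - j) - i := by omega
    rw [he, div_mul_eq_mul_div, eq_comm, eq_div_iff hdj.ne', pow_add]
    linear_combination (-(x^i * x^j * (1-x)^((d-j)-i))) * h1r
  have hzero : ∀ k ∈ range j, ((k.choose j : ℝ) / (d.choose j)) * bb d k x = 0 := by
    intro k hk
    simp only [mem_range] at hk
    rw [Nat.choose_eq_zero_of_lt hk]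
    simp
  have hsplit : ∑ k ∈ range (d + 1), ((k.choose j : ℝ) / (d.choose j)) * bb d k x
      = ∑ k ∈ Ico j (d+1), ((k.choose j : ℝ) / (d.choose j)) * bb d k x := by
    rw [range_eq_Ico, ← Finset.sum_Ico_consecutive _ (Nat.zero_le j) (by omega)]
    rw [← range_eq_Ico] at *
    rw [Finset.sum_eq_zero hzero, zero_add]
  rw [hsplit, Finset.sum_Ico_eq_sum_range]
  have : ∀ i ∈ range (d + 1 - j), ((Nat.choose (j+i) j : ℝ) / (d.choose j)) * bb d (j+i) x
      = x ^ j * bb (d-j) i x := by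
    intro i hi
    simp only [mem_range] at hi
    have := key i (by omega)
    rw [add_comm j i]
    exact this
  rw [Finset.sum_congr rfl this, ← Finset.mul_sum]
  have : d + 1 - j = (d - j) + 1 := by omega
  rw [this, bb_sum, mul_one]


set_option maxHeartbeats 1000000 in
lemma ratio_bounds (d : ℕ) : ∀ j k : ℕ, 2*(j:ℕ) ≤ d → k ≤ d →
    (k.choose j : ℝ)/(d.choose j) ≤ ((k:ℝ)/d)^j ∧
    ((k:ℝ)/d)^j - (j:ℝ)^2/d ≤ (k.choose j : ℝ)/(d.choose j) := by
  intro j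
  induction j with
  | zero => intro k h2j hk; simp
  | succ j ih =>
    intro k h2j hk
    have hd0 : 0 < d := by omega
    have hdR : (0:ℝ) < (d:ℝ) := by exact_mod_cast hd0
    have hjd : (j:ℝ) < (d:ℝ) := by exact_mod_cast (by omega : j < d)
    set a : ℝ := (k:ℝ)/d with ha
    have ha0 : 0 ≤ a := by positivity
    have ha1 : a ≤ 1 := by
      rw [ha, div_le_one hdR]; exact_mod_cast hk
    by_cases hkj : k ≤ j
    · have hcz : k.choose (j+1) = 0 := Nat.choose_eq_zero_of_lt (by omega)
      rw [hcz]
      constructor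
      · simp; positivity
      · simp only [Nat.cast_zero, zero_div]
        have h1 : a^(j+1) ≤ a^1 := pow_le_pow_of_le_one ha0 ha1 (by omega)
        rw [pow_one] at h1
        have h2 : a ≤ (j:ℝ)/d := by
          rw [ha, div_le_div_iff₀ hdR hdR]
          have : (k:ℝ) ≤ (j:ℝ) := by exact_mod_cast hkj
          nlinarith
        have h3 : (j:ℝ)/d ≤ ((j:ℝ)+1)^2/d := by
          gcongr <;> nlinarith
        push_cast
        nlinarith [sq_nonneg ((j:ℝ))]
    · -- k ≥ j + 1
      push_neg at hkj
      obtain ⟨hup, hlo⟩ := ih k (by omega) hk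
      have hkjR : (j:ℝ) < (k:ℝ) := by exact_mod_cast hkj
      have hcdj : (0:ℝ) < (d.choose j : ℝ) := by exact_mod_cast Nat.choose_pos (by omega : j ≤ d)
      have hcdj1 : (0:ℝ) < (d.choose (j+1) : ℝ) := by
        exact_mod_cast Nat.choose_pos (by omega : j+1 ≤ d)
      have hckj : (0:ℝ) ≤ (k.choose j : ℝ) := by positivity
      have hk1 : (k.choose (j+1) : ℝ) * ((j:ℝ)+1) = (k.choose j : ℝ) * ((k:ℝ) - j) := by
        have h' : ((k.choose (j+1) * (j+1) : ℕ) : ℝ) = ((k.choose j * (k - j) : ℕ) : ℝ) := by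
          exact_mod_cast Nat.choose_succ_right_eq k j
        push_cast [Nat.cast_sub (le_of_lt hkj)] at h'
        convert h' using 2 <;> push_cast <;> ring
      have hd1 : (d.choose (j+1) : ℝ) * ((j:ℝ)+1) = (d.choose j : ℝ) * ((d:ℝ) - j) := by
        have h' : ((d.choose (j+1) * (j+1) : ℕ) : ℝ) = ((d.choose j * (d - j) : ℕ) : ℝ) := by
          exact_mod_cast Nat.choose_succ_right_eq d j
        push_cast [Nat.cast_sub (by omega : j ≤ d)] at h'
        convert h' using 2 <;> push_cast <;> ring
      set t : ℝ := ((k:ℝ) - j)/((d:ℝ) - j) with ht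
      have hdj0 : (0:ℝ) < (d:ℝ) - j := by linarith
      have hrec : (k.choose (j+1) : ℝ)/(d.choose (j+1)) = ((k.choose j : ℝ)/(d.choose j)) * t := by
        rw [ht]
        field_simp
        linear_combination ((d.choose (j+1) : ℝ) * hk1 - (k.choose (j+1) : ℝ) * hd1)
      have ht0 : 0 ≤ t := by
        apply div_nonneg (by linarith) (by linarith)
      have hta : t ≤ a := by
        rw [ht, ha, div_le_div_iff₀ hdj0 hdR]
        have hkd : (k:ℝ) ≤ (d:ℝ) := by exact_mod_cast hk
        nlinarith [hkjR.le]
      have ht1 : t ≤ 1 := le_trans hta ha1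
      have hg0 : (0:ℝ) ≤ (k.choose j : ℝ)/(d.choose j) := by positivity
      have haj0 : (0:ℝ) ≤ a^j := by positivity
      have haj1 : a^j ≤ 1 := pow_le_one₀ ha0 ha1
      have hat : a - t ≤ 2*(j:ℝ)/d := by
        have hkd : (k:ℝ) ≤ (d:ℝ) := by exact_mod_cast hk
        have hdj2 : (d:ℝ)/2 ≤ (d:ℝ) - j := by
          have : 2*(j:ℝ) ≤ (d:ℝ) := by exact_mod_cast (by omega : 2*j ≤ d)
          linarith
        have j0 : (0:ℝ) ≤ (j:ℝ) := Nat.cast_nonneg j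
        have e : a - t = (j:ℝ)*((d:ℝ)-k)/((d:ℝ)*((d:ℝ)-j)) := by
          rw [ha, ht]; field_simp; ring
        have hden : (0:ℝ) < (d:ℝ)*((d:ℝ)-j) := mul_pos hdR hdj0
        rw [e, div_le_div_iff₀ hden hdR]
        have ineq : ((d:ℝ) - k) ≤ 2*((d:ℝ) - j) := by linarith
        have h5 := mul_le_mul_of_nonneg_right
          (mul_le_mul_of_nonneg_left ineq j0) hdR.le
        linarith [h5]
      rw [hrec]
      constructor
      · calc (k.choose j : ℝ)/(d.choose j) * t ≤ a^j * a := by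
              apply mul_le_mul hup hta ht0 haj0
          _ = a^(j+1) := by ring
      · have key : a^(j+1) - ((k.choose j : ℝ)/(d.choose j)) * t ≤ ((j:ℝ)+1)^2/d := by
          have e1 : a^(j+1) - ((k.choose j : ℝ)/(d.choose j)) * t
              = a^j * (a - t) + (a^j - (k.choose j : ℝ)/(d.choose j)) * t := by ring
          rw [e1]
          have b1 : a^j * (a - t) ≤ 1 * (2*(j:ℝ)/d) := by
            apply mul_le_mul haj1 hat (sub_nonneg.mpr hta) zero_le_one
          have b2 : (a^j - (k.choose j : ℝ)/(d.choose j)) * t ≤ ((j:ℝ)^2/d) * 1 := by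
            apply mul_le_mul (by linarith) ht1 ht0 (by positivity)
          have : (2*(j:ℝ)/d) + (j:ℝ)^2/d ≤ ((j:ℝ)+1)^2/d := by
            rw [← add_div, div_le_div_iff₀ hdR hdR]
            nlinarith
          linarith
        push_cast
        push_cast at key
        linarith

noncomputable def coeffArr (p : Polynomial ℝ) (d k : ℕ) : ℝ :=
  ∑ j ∈ range (p.natDegree + 1), p.coeff j * ((k.choose j : ℝ) / (d.choose j))

lemma rep (p : Polynomial ℝ) (d : ℕ) (hd : p.natDegree ≤ d) (x : ℝ) :
    p.eval x = ∑ k ∈ range (d + 1), coeffArr p d k * bb d k x := by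
  rw [Polynomial.eval_eq_sum_range]
  have : ∀ j ∈ range (p.natDegree + 1), p.coeff j * x ^ j
      = ∑ k ∈ range (d + 1), p.coeff j * (((k.choose j : ℝ) / (d.choose j)) * bb d k x) := by
    intro j hj
    simp only [mem_range] at hj
    rw [pow_eq_sum d j (by omega) x, Finset.mul_sum]
  rw [Finset.sum_congr rfl this, Finset.sum_comm]
  apply Finset.sum_congr rfl
  intro k _
  rw [coeffArr, Finset.sum_mul]
  apply Finset.sum_congr rfl
  intro j _
  ring

lemma core (r : Polynomial ℝ) (hr : ∀ x ∈ Set.Icc (0:ℝ) 1, 0 < r.eval x) :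
    ∃ D, r.natDegree ≤ D ∧ ∀ d, D ≤ d → ∀ k ≤ d, 0 ≤ coeffArr r d k := by
  obtain ⟨x₀, hx₀, hmin⟩ := isCompact_Icc.exists_isMinOn (Set.nonempty_Icc.mpr zero_le_one)
    (Polynomial.continuous r).continuousOn
  set δ := r.eval x₀ with hδ
  have hδ0 : 0 < δ := hr x₀ hx₀
  set M := r.natDegree with hM
  set Cb := ∑ j ∈ range (M + 1), |r.coeff j| * (j:ℝ)^2 with hCb
  have hCb0 : 0 ≤ Cb := Finset.sum_nonneg fun j _ => by positivity
  obtain ⟨N, hN⟩ := exists_nat_gt (Cb / δ)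
  refine ⟨max (2*M) N + 1, by omega, ?_⟩
  intro d hd k hk
  have hd0 : 0 < d := by omega
  have hdR : (0:ℝ) < (d:ℝ) := by exact_mod_cast hd0
  have hCd : Cb < δ * d := by
    have hNd : (N:ℝ) ≤ (d:ℝ) := by exact_mod_cast (by omega : N ≤ d)
    have := (div_lt_iff₀ hδ0).mp (lt_of_lt_of_le hN hNd)
    linarith
  set a : ℝ := (k:ℝ)/d with ha
  have ha0 : 0 ≤ a := by positivity
  have ha1 : a ≤ 1 := by
    rw [ha, div_le_one hdR]; exact_mod_cast hk
  have heval : r.eval a = ∑ j ∈ range (M + 1), r.coeff j * a ^ j := by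
    rw [Polynomial.eval_eq_sum_range]
  have hterm : ∀ j ∈ range (M + 1),
      r.coeff j * a ^ j - |r.coeff j| * (j:ℝ)^2 / d ≤ r.coeff j * ((k.choose j : ℝ)/(d.choose j)) := by
    intro j hj
    simp only [mem_range] at hj
    obtain ⟨hup, hlo⟩ := ratio_bounds d j k (by omega) hk
    have habs : |a ^ j - (k.choose j : ℝ)/(d.choose j)| ≤ (j:ℝ)^2 / d := by
      rw [abs_le]
      constructor <;> [linarith; linarith]
    have : r.coeff j * (a ^ j - (k.choose j : ℝ)/(d.choose j)) ≤ |r.coeff j| * ((j:ℝ)^2/d) := by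
      calc r.coeff j * (a ^ j - (k.choose j : ℝ)/(d.choose j))
          ≤ |r.coeff j * (a ^ j - (k.choose j : ℝ)/(d.choose j))| := le_abs_self _
        _ = |r.coeff j| * |a ^ j - (k.choose j : ℝ)/(d.choose j)| := abs_mul _ _
        _ ≤ |r.coeff j| * ((j:ℝ)^2/d) := by
            apply mul_le_mul_of_nonneg_left habs (abs_nonneg _)
    ring_nf at this ⊢; linarith
  have hsum : r.eval a - Cb / d ≤ coeffArr r d k := by
    rw [heval, coeffArr, hCb]
    rw [Finset.sum_div, ← Finset.sum_sub_distrib]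
    apply Finset.sum_le_sum
    intro j hj
    have := hterm j hj
    ring_nf at this ⊢; linarith
  have hra : δ ≤ r.eval a := hmin ⟨ha0, ha1⟩
  have : Cb / d ≤ δ := by
    rw [div_le_iff₀ hdR]; linarith
  linarith

def BRep (p : Polynomial ℝ) (d : ℕ) : Prop :=
  ∃ β : ℕ → ℝ, (∀ k, k ≤ d → 0 ≤ β k) ∧
    ∀ x : ℝ, p.eval x = ∑ k ∈ range (d + 1), β k * bb d k x

lemma core' (r : Polynomial ℝ) (hr : ∀ x ∈ Set.Icc (0:ℝ) 1, 0 < r.eval x) :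
    ∃ D, r.natDegree ≤ D ∧ ∀ d, D ≤ d → BRep r d := by
  obtain ⟨D, hD, h⟩ := core r hr
  exact ⟨D, hD, fun d hd => ⟨coeffArr r d, fun k hk => h d hd k hk,
    fun x => rep r d (le_trans hD hd) x⟩⟩

lemma rep_mul_X {p : Polynomial ℝ} {d : ℕ} (h : BRep p d) : BRep (Polynomial.X * p) (d + 1) := by
  obtain ⟨β, hβ, hx⟩ := h
  refine ⟨fun k => if k = 0 then 0 else β (k - 1) * (k : ℝ) / ((d:ℝ) + 1), ?_, ?_⟩
  · intro k hk
    by_cases h0 : k = 0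
    · simp [h0]
    · simp only [h0, if_false]
      have : 0 ≤ β (k - 1) := hβ _ (by omega)
      positivity
  · intro x
    rw [Polynomial.eval_mul, Polynomial.eval_X, hx, Finset.mul_sum,
      Finset.sum_range_succ' (fun k => (if k = 0 then 0 else β (k - 1) * (k : ℝ) / ((d:ℝ) + 1)) * bb (d+1) k x) (d+1)]
    rw [if_pos rfl, zero_mul, add_zero]
    apply Finset.sum_congr rfl
    intro k _
    rw [if_neg (Nat.succ_ne_zero k), ← mul_assoc x (β k), mul_comm x (β k), mul_assoc,
      bb_mul_x d k x, Nat.add_sub_cancel]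
    push_cast
    ring

lemma rep_mul_one_sub {p : Polynomial ℝ} {d : ℕ} (h : BRep p d) :
    BRep ((1 - Polynomial.X) * p) (d + 1) := by
  obtain ⟨β, hβ, hx⟩ := h
  refine ⟨fun k => if k ≤ d then β k * (((d:ℝ) + 1 - k) / ((d:ℝ) + 1)) else 0, ?_, ?_⟩
  · intro k hk
    by_cases h0 : k ≤ d
    · simp only [h0, if_true]
      have h1 : 0 ≤ β k := hβ _ h0
      have h2 : (k:ℝ) ≤ (d:ℝ) := by exact_mod_cast h0
      have h3 : (0:ℝ) ≤ (d:ℝ) + 1 - k := by linarith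
      positivity
    · simp [h0]
  · intro x
    rw [Polynomial.eval_mul, Polynomial.eval_sub, Polynomial.eval_one, Polynomial.eval_X, hx,
      Finset.mul_sum, Finset.sum_range_succ
        (fun k => (if k ≤ d then β k * (((d:ℝ) + 1 - k) / ((d:ℝ) + 1)) else 0) * bb (d+1) k x) (d+1)]
    rw [if_neg (by omega : ¬ (d + 1 ≤ d)), zero_mul, add_zero]
    apply Finset.sum_congr rfl
    intro k hk
    simp only [mem_range] at hk
    rw [if_pos (by omega : k ≤ d), ← mul_assoc (1-x) (β k), mul_comm (1-x) (β k), mul_assoc,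
      bb_mul_one_sub d k (by omega) x]
    ring

lemma bern_unique {d : ℕ} (c : ℕ → ℝ)
    (h : ∀ x : ℝ, (∑ k ∈ range (d + 1), c k * bb d k x) = 0) :
    ∀ k, k ≤ d → c k = 0 := by
  have hP : (∑ k ∈ range (d + 1), Polynomial.C (c k) * bernsteinPolynomial ℝ d k) = 0 := by
    apply Polynomial.funext
    intro x
    rw [Polynomial.eval_finset_sum]
    simp only [Polynomial.eval_mul, Polynomial.eval_C, bb_eval, Polynomial.eval_zero]
    exact h x
  intro k
  induction k using Nat.strong_induction_on with
  | _ k ih =>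
    intro hk
    have hd := congrArg (fun q => (Polynomial.derivative^[k] q).eval 0) hP
    simp only [Polynomial.iterate_derivative_sum, Polynomial.iterate_derivative_C_mul,
      Polynomial.eval_finset_sum, Polynomial.eval_mul, Polynomial.eval_C,
      Polynomial.iterate_derivative_zero, Polynomial.eval_zero] at hd
    rw [Finset.sum_eq_single k] at hd
    · have hne := bernsteinPolynomial.iterate_derivative_at_0_ne_zero ℝ d k hk
      exact (mul_eq_zero.mp hd).resolve_right hne
    · intro ν _ hν
      rcases lt_or_gt_of_ne hν with hlt | hgt
      · rw [ih ν hlt (by omega), zero_mul]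
      · rw [bernsteinPolynomial.iterate_derivative_at_0_eq_zero_of_lt ℝ d hgt, mul_zero]
    · intro hk'
      simp only [mem_range] at hk'
      omega

lemma eval_boundary_pos {p : Polynomial ℝ} (hpos : ∀ x ∈ Set.Ioo (0:ℝ) 1, 0 < p.eval x) :
    (p.eval 0 ≠ 0 → 0 < p.eval 0) ∧ (p.eval 1 ≠ 0 → 0 < p.eval 1) := by
  constructor
  · intro hne
    have hmem : (0:ℝ) ∈ closure (Set.Ioo (0:ℝ) 1) := by
      rw [closure_Ioo one_ne_zero.symm]
      exact ⟨le_refl 0, zero_le_one⟩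
    have hnb : (nhdsWithin (0:ℝ) (Set.Ioo 0 1)).NeBot :=
      mem_closure_iff_nhdsWithin_neBot.mp hmem
    have ht : Filter.Tendsto (fun x : ℝ => p.eval x) (nhdsWithin 0 (Set.Ioo 0 1))
        (nhds (p.eval 0)) := ((p.continuous).tendsto 0).mono_left nhdsWithin_le_nhds
    have hle : 0 ≤ p.eval 0 := by
      apply ge_of_tendsto ht
      filter_upwards [self_mem_nhdsWithin] with x hx
      exact (hpos x hx).le
    exact lt_of_le_of_ne hle (Ne.symm hne)
  · intro hne
    have hmem : (1:ℝ) ∈ closure (Set.Ioo (0:ℝ) 1) := by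
      rw [closure_Ioo one_ne_zero.symm]
      exact ⟨zero_le_one, le_refl 1⟩
    have hnb : (nhdsWithin (1:ℝ) (Set.Ioo 0 1)).NeBot :=
      mem_closure_iff_nhdsWithin_neBot.mp hmem
    have ht : Filter.Tendsto (fun x : ℝ => p.eval x) (nhdsWithin 1 (Set.Ioo 0 1))
        (nhds (p.eval 1)) := ((p.continuous).tendsto 1).mono_left nhdsWithin_le_nhds
    have hle : 0 ≤ p.eval 1 := by
      apply ge_of_tendsto ht
      filter_upwards [self_mem_nhdsWithin] with x hx
      exact (hpos x hx).le
    exact lt_of_le_of_ne hle (Ne.symm hne)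

lemma rep_all : ∀ n (p : Polynomial ℝ), p.natDegree = n → p ≠ 0 →
    (∀ x ∈ Set.Ioo (0:ℝ) 1, 0 < p.eval x) →
    ∃ D, p.natDegree ≤ D ∧ ∀ d, D ≤ d → BRep p d := by
  intro n
  induction n using Nat.strong_induction_on with
  | _ n ih =>
    intro p hn hp hpos
    by_cases h0 : p.eval 0 = 0
    · -- factor out X
      have hdvd : Polynomial.X ∣ p := by
        rw [Polynomial.X_dvd_iff, Polynomial.coeff_zero_eq_eval_zero]; exact h0
      obtain ⟨q, hq⟩ := hdvd
      have hq0 : q ≠ 0 := fun h => hp (by rw [hq, h, mul_zero])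
      have hdeg : p.natDegree = q.natDegree + 1 := by
        rw [hq, Polynomial.natDegree_mul Polynomial.X_ne_zero hq0, Polynomial.natDegree_X]
        omega
      have hqpos : ∀ x ∈ Set.Ioo (0:ℝ) 1, 0 < q.eval x := by
        intro x hx
        have h1 := hpos x hx
        rw [hq, Polynomial.eval_mul, Polynomial.eval_X] at h1
        by_contra hle
        push_neg at hle
        nlinarith [hx.1]
      obtain ⟨D, hD1, hD2⟩ := ih q.natDegree (by omega) q rfl hq0 hqpos
      refine ⟨D + 1, by omega, ?_⟩
      intro d hd
      have hrep := rep_mul_X (hD2 (d - 1) (by omega))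
      have : d - 1 + 1 = d := by omega
      rw [this] at hrep
      rwa [hq]
    · by_cases h1 : p.eval 1 = 0
      · -- factor out (1 - X)
        have hdvd : (Polynomial.X - Polynomial.C 1) ∣ p := Polynomial.dvd_iff_isRoot.mpr h1
        obtain ⟨q, hq⟩ := hdvd
        have hq' : p = (1 - Polynomial.X) * (-q) := by rw [hq, Polynomial.C_1]; ring
        have hq0 : (-q) ≠ 0 := fun h => hp (by rw [hq', h, mul_zero])
        have h1X : (1 - Polynomial.X : Polynomial ℝ) ≠ 0 := by
          intro h
          have := congrArg (Polynomial.eval 0) h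
          simp at this
        have hdegX : (1 - Polynomial.X : Polynomial ℝ).natDegree = 1 := by
          have : (1 - Polynomial.X : Polynomial ℝ) = -(Polynomial.X - Polynomial.C 1) := by rw [Polynomial.C_1]; ring
          rw [this, Polynomial.natDegree_neg, Polynomial.natDegree_X_sub_C]
        have hdeg : p.natDegree = (-q).natDegree + 1 := by
          rw [hq', Polynomial.natDegree_mul h1X hq0, hdegX]
          omega
        have hqpos : ∀ x ∈ Set.Ioo (0:ℝ) 1, 0 < (-q).eval x := by
          intro x hx
          have hp1 := hpos x hx
          rw [hq', Polynomial.eval_mul, Polynomial.eval_sub, Polynomial.eval_one,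
            Polynomial.eval_X] at hp1
          have hx1 : 0 < 1 - x := by linarith [hx.2]
          by_contra hle
          push_neg at hle
          nlinarith
        obtain ⟨D, hD1, hD2⟩ := ih (-q).natDegree (by omega) (-q) rfl hq0 hqpos
        refine ⟨D + 1, by omega, ?_⟩
        intro d hd
        have hrep := rep_mul_one_sub (hD2 (d - 1) (by omega))
        have : d - 1 + 1 = d := by omega
        rw [this] at hrep
        rwa [hq']
      · -- positive on all of [0,1]
        have hb := eval_boundary_pos hpos
        have hpos' : ∀ x ∈ Set.Icc (0:ℝ) 1, 0 < p.eval x := by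
          intro x hx
          rcases eq_or_lt_of_le hx.1 with he | hlt
          · rw [← he]; exact hb.1 h0
          rcases eq_or_lt_of_le hx.2 with he | hlt2
          · rw [he]; exact hb.2 h1
          exact hpos x ⟨hlt, hlt2⟩
        exact core' p hpos'

theorem bernstein_coeffs_in_unit_interval (p : Polynomial ℝ) :
    (∃ d : ℕ, p.natDegree ≤ d ∧ ∃ β : ℕ → ℝ,
      (∀ k ≤ d, 0 ≤ β k ∧ β k ≤ 1) ∧
      p = ∑ k ∈ Finset.range (d + 1), Polynomial.C (β k) * bernsteinPolynomial ℝ d k)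
    ↔ (p = 0 ∨ p = 1 ∨
        ((0 ≤ p.eval 0 ∧ p.eval 0 ≤ 1) ∧ (0 ≤ p.eval 1 ∧ p.eval 1 ≤ 1) ∧
          ∀ x ∈ Set.Ioo (0 : ℝ) 1, 0 < p.eval x ∧ p.eval x < 1)) := by
  constructor
  · rintro ⟨d, hd, β, hβ, heq⟩
    by_cases hp0 : p = 0
    · exact Or.inl hp0
    by_cases hp1 : p = 1
    · exact Or.inr (Or.inl hp1)
    have hevals : ∀ x : ℝ, p.eval x = ∑ k ∈ range (d + 1), β k * bb d k x := by
      intro x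
      rw [heq, Polynomial.eval_finset_sum]
      simp only [Polynomial.eval_mul, Polynomial.eval_C, bb_eval]
    have hlow : ∀ x : ℝ, 0 ≤ x → x ≤ 1 → 0 ≤ p.eval x := by
      intro x h0 h1
      rw [hevals]
      exact Finset.sum_nonneg fun k hk =>
        mul_nonneg ((hβ k (by simpa [Nat.lt_succ_iff] using hk)).1) (bb_nonneg d k h0 h1)
    have hhigh : ∀ x : ℝ, 0 ≤ x → x ≤ 1 → p.eval x ≤ 1 := by
      intro x h0 h1
      rw [hevals]
      calc ∑ k ∈ range (d + 1), β k * bb d k x ≤ ∑ k ∈ range (d + 1), bb d k x := by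
            apply Finset.sum_le_sum
            intro k hk
            have hb := bb_nonneg d k h0 h1
            have := (hβ k (by simpa [Nat.lt_succ_iff] using hk)).2
            nlinarith
        _ = 1 := bb_sum d x
    refine Or.inr (Or.inr ⟨⟨hlow 0 le_rfl zero_le_one, hhigh 0 le_rfl zero_le_one⟩,
      ⟨hlow 1 zero_le_one le_rfl, hhigh 1 zero_le_one le_rfl⟩, ?_⟩)
    intro x hx
    constructor
    · rcases lt_or_eq_of_le (hlow x hx.1.le hx.2.le) with h | h
      · exact h
      exfalso
      apply hp0
      have hzero : ∀ k ∈ range (d + 1), β k * bb d k x = 0 := by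
        rw [← Finset.sum_eq_zero_iff_of_nonneg]
        · rw [← hevals x]; exact h.symm
        · intro k hk
          exact mul_nonneg ((hβ k (by simpa [Nat.lt_succ_iff] using hk)).1)
            (bb_nonneg d k hx.1.le hx.2.le)
      have hβ0 : ∀ k, k ≤ d → β k = 0 := by
        intro k hk
        have := hzero k (by simp [Nat.lt_succ_iff, hk])
        have hb := bb_pos hk hx.1 hx.2
        rcases mul_eq_zero.mp this with h' | h'
        · exact h'
        · exact absurd h' hb.ne'
      apply Polynomial.funext
      intro y
      rw [hevals y, Polynomial.eval_zero]
      apply Finset.sum_eq_zero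
      intro k hk
      rw [hβ0 k (by simpa [Nat.lt_succ_iff] using hk), zero_mul]
    · rcases lt_or_eq_of_le (hhigh x hx.1.le hx.2.le) with h | h
      · exact h
      exfalso
      apply hp1
      have hevals2 : ∑ k ∈ range (d + 1), (1 - β k) * bb d k x = 0 := by
        have h1 := bb_sum d x
        have h2 := hevals x
        rw [h] at h2
        simp only [sub_mul, one_mul]
        rw [Finset.sum_sub_distrib, h1, ← h2, sub_self]
      have hzero : ∀ k ∈ range (d + 1), (1 - β k) * bb d k x = 0 := by
        rw [← Finset.sum_eq_zero_iff_of_nonneg]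
        · exact hevals2
        · intro k hk
          have := (hβ k (by simpa [Nat.lt_succ_iff] using hk)).2
          have hb := bb_nonneg d k hx.1.le hx.2.le
          nlinarith
      have hβ1 : ∀ k, k ≤ d → β k = 1 := by
        intro k hk
        have := hzero k (by simp [Nat.lt_succ_iff, hk])
        have hb := bb_pos hk hx.1 hx.2
        rcases mul_eq_zero.mp this with h' | h'
        · linarith [h']
        · exact absurd h' hb.ne'
      apply Polynomial.funext
      intro y
      rw [hevals y, Polynomial.eval_one]
      have : ∀ k ∈ range (d + 1), β k * bb d k y = bb d k y := by
        intro k hk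
        rw [hβ1 k (by simpa [Nat.lt_succ_iff] using hk), one_mul]
      rw [Finset.sum_congr rfl this, bb_sum]
  · rintro (hp0 | hp1 | ⟨⟨h00, h01⟩, ⟨h10, h11⟩, hmid⟩)
    · refine ⟨0, by simp [hp0], fun _ => 0, by simp, ?_⟩
      simp [hp0]
    · refine ⟨0, by simp [hp1], fun _ => 1, by simp, ?_⟩
      simp [hp1, bernsteinPolynomial]
    · have hp0 : p ≠ 0 := by
        intro h
        have := (hmid (1/2) (by norm_num)).1
        rw [h] at this
        simp at this
      have hp1 : p ≠ 1 := by
        intro h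
        have := (hmid (1/2) (by norm_num)).2
        rw [h] at this
        simp at this
      have hq0 : (1 - p : Polynomial ℝ) ≠ 0 := by
        intro h
        apply hp1
        have : p = 1 - (1 - p) := by ring
        rw [this, h, sub_zero]
      obtain ⟨D₁, hD₁, h₁⟩ := rep_all p.natDegree p rfl hp0 (fun x hx => (hmid x hx).1)
      obtain ⟨D₂, hD₂, h₂⟩ := rep_all (1-p).natDegree (1-p) rfl hq0 (by
        intro x hx
        have := (hmid x hx).2
        simp only [Polynomial.eval_sub, Polynomial.eval_one]
        linarith)
      set d := max D₁ D₂ with hdd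
      obtain ⟨β, hβ, hβx⟩ := h₁ d (le_max_left _ _)
      obtain ⟨γ, hγ, hγx⟩ := h₂ d (le_max_right _ _)
      have hsum1 : ∀ k, k ≤ d → β k + γ k = 1 := by
        have := bern_unique (fun k => β k + γ k - 1) (by
          intro x
          have e1 := hβx x
          have e2 := hγx x
          have e3 := bb_sum d x
          simp only [Polynomial.eval_sub, Polynomial.eval_one] at e2
          simp only [sub_mul, add_mul, one_mul]
          rw [Finset.sum_sub_distrib, Finset.sum_add_distrib, ← e1, ← e2, e3]
          ring)
        intro k hk
        have h5 := this k hk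
        linarith
      refine ⟨d, le_trans hD₁ (le_max_left _ _), β, ?_, ?_⟩
      · intro k hk
        refine ⟨hβ k hk, ?_⟩
        have h1 := hsum1 k hk
        have h2 := hγ k hk
        linarith
      · apply Polynomial.funext
        intro x
        rw [hβx x, Polynomial.eval_finset_sum]
        simp only [Polynomial.eval_mul, Polynomial.eval_C, bb_eval]
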